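/- Let M be a compact Riemannian manifold and ε > 0 such that every closed non-nullhomotopic loop in M has length at least 4ε. If f : M → M is a local diffeomorphism with d(f(x), x) < ε for all x ∈ M, then f is injective. -/

import Mathlib

namespace Statement6Aux
section Var
open Set Metric unitInterval
lemma dist_le_of_evarX {M : Type*} [MetricSpace M] {x y : M} (γ : Path x y) {d : ℝ} (hd : 0 ≤ d)
    (h : eVariationOn γ Set.univ ≤ ENNReal.ofReal d) (t : ℝ) :
    dist (γ.extend t) x ≤ d := by
  have h0 : γ.extend t = γ (Set.projIcc 0 1 zero_le_one t) := rfl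
  have key : edist (γ (Set.projIcc 0 1 zero_le_one t)) (γ 0) ≤ ENNReal.ofReal d :=
    le_trans (eVariationOn.edist_le γ (Set.mem_univ _) (Set.mem_univ _)) h
  rw [edist_le_ofReal hd] at key
  calc dist (γ.extend t) x = dist (γ (Set.projIcc 0 1 zero_le_one t)) (γ 0) := by
        rw [h0, γ.source]
    _ ≤ d := key
lemma univI_eq_Icc : (Set.univ : Set I) = Set.Icc 0 1 := by
  ext t
  simp only [Set.mem_univ, Set.mem_Icc, true_iff]
  exact ⟨t.2.1, t.2.2⟩
lemma evar_symm_le {M : Type*} [MetricSpace M] {x y : M} (γ : Path x y) :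
    eVariationOn γ.symm Set.univ ≤ eVariationOn γ Set.univ := by
  have h1 : EqOn (⇑γ.symm) (⇑γ ∘ unitInterval.symm) Set.univ := fun t _ => rfl
  rw [eVariationOn.eq_of_eqOn h1]
  refine eVariationOn.comp_le_of_antitoneOn _ _ (fun u _ v _ huv => ?_) (Set.mapsTo_univ _ _)
  apply Subtype.coe_le_coe.mp
  rw [coe_symm_eq, coe_symm_eq]
  have := Subtype.coe_le_coe.mpr huv
  linarith
lemma evar_trans_le {M : Type*} [MetricSpace M] {x y z : M} (γ : Path x y) (δ : Path y z) :
    eVariationOn (γ.trans δ) Set.univ ≤ eVariationOn γ Set.univ + eVariationOn δ Set.univ := by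
  set μ : I := ⟨1/2, by norm_num, by norm_num⟩ with hμ
  have h0μ : (0 : I) ≤ μ := Subtype.mk_le_mk.mpr (by norm_num)
  have hμ1 : μ ≤ (1 : I) := Subtype.mk_le_mk.mpr (by norm_num)
  have key := eVariationOn.Icc_add_Icc (⇑(γ.trans δ)) h0μ hμ1 (Set.mem_univ μ)
  simp only [Set.univ_inter] at key
  have h1 : eVariationOn (⇑(γ.trans δ)) Set.univ
      = eVariationOn (⇑(γ.trans δ)) (Set.Icc 0 μ) + eVariationOn (⇑(γ.trans δ)) (Set.Icc μ 1) := by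
    rw [univI_eq_Icc, ← key]
  rw [h1]
  gcongr
  · -- first half
    set φ : I → I := fun t => ⟨min (2 * (t : ℝ)) 1, le_min (mul_nonneg zero_le_two t.2.1) zero_le_one,
      min_le_right _ _⟩ with hφ
    have heq : EqOn (⇑(γ.trans δ)) (⇑γ ∘ φ) (Set.Icc 0 μ) := by
      intro t ht
      have ht2 : (t : ℝ) ≤ 1 / 2 := Subtype.coe_le_coe.mpr ht.2
      have : min (2 * (t : ℝ)) 1 = 2 * (t : ℝ) := min_eq_left (by linarith)
      simp only [Path.trans_apply, ht2, dif_pos, Function.comp_apply, hφ]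
      congr 1
      exact Subtype.ext this.symm
    rw [eVariationOn.eq_of_eqOn heq]
    exact eVariationOn.comp_le_of_monotoneOn _ _
      (fun u _ v _ huv => Subtype.mk_le_mk.mpr
        (min_le_min (by have := Subtype.coe_le_coe.mpr huv; linarith) le_rfl))
      (Set.mapsTo_univ _ _)
  · -- second half
    set ψ : I → I := fun t => ⟨max (2 * (t : ℝ) - 1) 0, le_max_right _ _,
      max_le (by have := t.2.2; linarith) zero_le_one⟩ with hψ
    have heq : EqOn (⇑(γ.trans δ)) (⇑δ ∘ ψ) (Set.Icc μ 1) := by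
      intro t ht
      have ht2 : (1:ℝ) / 2 ≤ (t : ℝ) := Subtype.coe_le_coe.mpr ht.1
      rw [Path.trans_apply]
      by_cases h : (t : ℝ) ≤ 1 / 2
      · rw [dif_pos h]
        have hteq : (t : ℝ) = 1 / 2 := le_antisymm h ht2
        have h3 : (⟨2 * (t:ℝ), (mul_pos_mem_iff zero_lt_two).2 ⟨t.2.1, h⟩⟩ : I) = 1 :=
          Subtype.ext (by simp only [Set.Icc.coe_one]; rw [hteq]; norm_num)
        rw [h3, γ.target]
        have h4 : ψ t = 0 := Subtype.ext (by simp only [hψ]; rw [hteq]; norm_num)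
        simp only [Function.comp_apply, h4, δ.source]
      · rw [dif_neg h]
        have : max (2 * (t : ℝ) - 1) 0 = 2 * (t : ℝ) - 1 := max_eq_left (by push_neg at h; linarith)
        simp only [Function.comp_apply, hψ]
        congr 1
        exact Subtype.ext this.symm
    rw [eVariationOn.eq_of_eqOn heq]
    exact eVariationOn.comp_le_of_monotoneOn _ _
      (fun u _ v _ huv => Subtype.mk_le_mk.mpr
        (max_le_max (by have := Subtype.coe_le_coe.mpr huv; linarith) le_rfl))
      (Set.mapsTo_univ _ _)
end Var
section Alg
open Set
lemma homotopic_of_trans_symm {X : Type*} [TopologicalSpace X] {x y : X} (P q : Path x y)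
    (h : (P.trans q.symm).Homotopic (Path.refl x)) : q.Homotopic P := by
  have h1 : q.Homotopic ((Path.refl x).trans q) := ⟨(Path.Homotopy.reflTrans q).symm⟩
  have h2 : ((Path.refl x).trans q).Homotopic ((P.trans q.symm).trans q) :=
    Path.Homotopic.hcomp h.symm (Path.Homotopic.refl q)
  have h3 : ((P.trans q.symm).trans q).Homotopic (P.trans (q.symm.trans q)) :=
    ⟨Path.Homotopy.transAssoc P q.symm q⟩
  have h4 : (P.trans (q.symm.trans q)).Homotopic (P.trans (Path.refl y)) :=
    Path.Homotopic.hcomp (Path.Homotopic.refl P) ⟨(Path.Homotopy.reflSymmTrans q).symm⟩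
  have h5 : (P.trans (Path.refl y)).Homotopic P := ⟨Path.Homotopy.transRefl P⟩
  exact ((((h1.trans h2).trans h3).trans h4).trans h5)
end Alg
section Lift
open Set Metric
variable {M : Type*} [MetricSpace M] {f : M → M} {r : ℝ} {C : M → OpenPartialHomeomorph M M}
lemma lift_unique (hC1 : ∀ y, y ∈ (C y).source) (hC2 : ∀ y, f = ↑(C y))
    {w g h : ℝ → M} {a b : ℝ} (hg : Continuous g) (hh : Continuous h)
    (hgw : ∀ t ∈ Icc a b, f (g t) = w t) (hhw : ∀ t ∈ Icc a b, f (h t) = w t)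
    {c : ℝ} (hc : c ∈ Icc a b) (hch : g c = h c) : EqOn g h (Icc a b) := by
  haveI : PreconnectedSpace (Icc a b) := Subtype.preconnectedSpace isPreconnected_Icc
  set S : Set (Icc a b) := {t | g t = h t} with hS
  have hSclosed : IsClosed S :=
    isClosed_eq (hg.comp continuous_subtype_val) (hh.comp continuous_subtype_val)
  have hSopen : IsOpen S := by
    rw [isOpen_iff_mem_nhds]
    intro t ht
    set e := C (g (t : ℝ)) with he
    have h1 : IsOpen ((fun s : Icc a b => g s) ⁻¹' e.source ∩
        (fun s : Icc a b => h s) ⁻¹' e.source) :=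
      IsOpen.inter (e.open_source.preimage (hg.comp continuous_subtype_val))
        (e.open_source.preimage (hh.comp continuous_subtype_val))
    have h2 : t ∈ (fun s : Icc a b => g s) ⁻¹' e.source ∩
        (fun s : Icc a b => h s) ⁻¹' e.source := by
      constructor
      · exact hC1 _
      · show h (t:ℝ) ∈ e.source
        rw [← ht]
        exact hC1 _
    refine Filter.mem_of_superset (h1.mem_nhds h2) ?_
    rintro s ⟨hs1, hs2⟩
    show g s = h s
    have hfeq : f (g s) = f (h s) := by
      rw [hgw s s.2, hhw s s.2]
    rw [hC2 (g (t:ℝ))] at hfeq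
    exact e.injOn hs1 hs2 hfeq
  have hSuniv : S = univ := IsClopen.eq_univ ⟨hSclosed, hSopen⟩ ⟨⟨c, hc⟩, hch⟩
  intro s hs
  have : (⟨s, hs⟩ : Icc a b) ∈ S := hSuniv ▸ mem_univ _
  exact this
lemma lift_exists (hr : 0 < r) (hC1 : ∀ y, y ∈ (C y).source) (hC2 : ∀ y, f = ↑(C y))
    (hC3 : ∀ y, Metric.ball (f y) r ⊆ (C y).target)
    {w : ℝ → M} (hw : Continuous w) {ξ : M} (hξ : f ξ = w 0) :
    ∃ g : ℝ → M, Continuous g ∧ g 0 = ξ ∧ ∀ t ∈ Icc (0:ℝ) 1, f (g t) = w t := by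
  obtain ⟨δ, hδ, hδw⟩ : ∃ δ > 0, ∀ s ∈ Icc (0:ℝ) 1, ∀ t ∈ Icc (0:ℝ) 1,
      dist s t < δ → dist (w s) (w t) < r := by
    have hu := (isCompact_Icc (a := (0:ℝ)) (b := 1)).uniformContinuousOn_of_continuous
      hw.continuousOn
    rw [Metric.uniformContinuousOn_iff] at hu
    obtain ⟨δ, hδ, hd⟩ := hu r hr
    exact ⟨δ, hδ, fun s hs t ht hst => hd s hs t ht hst⟩
  obtain ⟨n, hn⟩ := exists_nat_one_div_lt hδ
  set N : ℕ := n + 1 with hN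
  have hNpos : (0:ℝ) < N := by positivity
  have hmesh : (1:ℝ)/N < δ := by exact_mod_cast hn
  have key : ∀ k : ℕ, k ≤ N → ∃ g : ℝ → M, Continuous g ∧ g 0 = ξ ∧
      (∀ t ∈ Icc (0:ℝ) ((k:ℝ)/N), f (g t) = w t) ∧
      ∀ t : ℝ, (k:ℝ)/N ≤ t → g t = g ((k:ℝ)/N) := by
    intro k
    induction k with
    | zero =>
      intro _
      refine ⟨fun _ => ξ, continuous_const, rfl, ?_, fun _ _ => rfl⟩
      intro t ht
      simp only [Nat.cast_zero, zero_div] at ht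
      have : t = 0 := le_antisymm ht.2 ht.1
      rw [this, hξ]
    | succ k ih =>
      intro hk1
      have hkN : k ≤ N := le_of_lt (Nat.lt_of_succ_le hk1)
      obtain ⟨g, hgc, hg0, hglift, hgconst⟩ := ih hkN
      have hkk1 : (k:ℝ)/N ≤ ((k:ℝ)+1)/N := by
        have h' : (k:ℝ) ≤ (k:ℝ)+1 := by linarith
        gcongr
      have hk1N : ((k:ℝ)+1)/N ≤ 1 := by
        rw [div_le_one hNpos]
        exact_mod_cast hk1
      have hk0 : (0:ℝ) ≤ (k:ℝ)/N := by positivity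
      set y := g ((k:ℝ)/N) with hy
      have hfy : f y = w ((k:ℝ)/N) := hglift _ ⟨hk0, le_refl _⟩
      set e := C y with he
      set cl : ℝ → ℝ := fun t => min (max t ((k:ℝ)/N)) (((k:ℝ)+1)/N) with hcl
      have hclmem : ∀ t : ℝ, cl t ∈ Icc ((k:ℝ)/N) (((k:ℝ)+1)/N) := by
        intro t
        constructor
        · exact le_min (le_max_right _ _) hkk1
        · exact min_le_right _ _
      have hclcont : Continuous cl := ((continuous_id.max continuous_const).min continuous_const)
      have hwmem : ∀ t : ℝ, w (cl t) ∈ e.target := by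
        intro t
        apply hC3 y
        rw [hfy]
        apply mem_ball.mpr
        have h1 := hclmem t
        have h2 : cl t ∈ Icc (0:ℝ) 1 := ⟨le_trans hk0 h1.1, le_trans h1.2 hk1N⟩
        apply hδw _ h2 _ ⟨hk0, le_trans hkk1 hk1N⟩
        rw [Real.dist_eq, abs_sub_lt_iff]
        have h3 : ((k:ℝ)+1)/N - (k:ℝ)/N = 1/N := by ring
        have h4 := h1.1
        have h5 := h1.2
        constructor
        · linarith [hmesh]
        · linarith [hmesh, one_div_pos.mpr hNpos]
      have hbr2 : Continuous fun t => e.symm (w (cl t)) :=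
        e.continuousOn_symm.comp_continuous (hw.comp hclcont) hwmem
      have hclk : cl ((k:ℝ)/N) = (k:ℝ)/N := by
        rw [hcl]
        simp only
        rw [max_self, min_eq_left hkk1]
      have hsymm_fy : e.symm (f y) = y := by
        rw [hC2 y]
        exact (C y).left_inv (hC1 y)
      refine ⟨fun t => if t ≤ (k:ℝ)/N then g t else e.symm (w (cl t)), ?_, ?_, ?_, ?_⟩
      · apply Continuous.if_le hgc hbr2 continuous_id continuous_const
        intro t htk
        simp only [id_eq] at htk
        rw [htk, hclk, ← hfy, hsymm_fy, ← hy]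
      · simp only [if_pos hk0, hg0]
      · intro t ht
        beta_reduce
        rw [show ((k+1 : ℕ):ℝ) = (k:ℝ)+1 by push_cast; ring] at ht
        by_cases htk : t ≤ (k:ℝ)/N
        · rw [if_pos htk]
          exact hglift t ⟨ht.1, htk⟩
        · rw [if_neg htk]
          push_neg at htk
          have hclt : cl t = t := by
            rw [hcl]
            simp only
            rw [max_eq_left htk.le, min_eq_left ht.2]
          rw [hclt]
          have hmem := hwmem t
          rw [hclt] at hmem
          rw [hC2 y]
          exact (C y).right_inv hmem
      · intro t ht
        beta_reduce
        rw [show ((k+1 : ℕ):ℝ) = (k:ℝ)+1 by push_cast; ring] at ht ⊢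
        have hklt : (k:ℝ)/N < ((k:ℝ)+1)/N := by
          rw [div_lt_div_iff_of_pos_right hNpos]
          linarith
        have h1 : ¬ t ≤ (k:ℝ)/N := by push_neg; exact lt_of_lt_of_le hklt ht
        have h2 : ¬ ((k:ℝ)+1)/N ≤ (k:ℝ)/N := by push_neg; exact hklt
        rw [if_neg h1, if_neg h2]
        have hclt : cl t = ((k:ℝ)+1)/N := by
          rw [hcl]
          simp only
          rw [max_eq_left (le_trans hkk1 ht), min_eq_right ht]
        have hclt2 : cl (((k:ℝ)+1)/N) = ((k:ℝ)+1)/N := by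
          rw [hcl]
          simp only
          rw [max_eq_left hkk1, min_self]
        rw [hclt, hclt2]
  obtain ⟨g, hgc, hg0, hglift, _⟩ := key N le_rfl
  refine ⟨g, hgc, hg0, ?_⟩
  have : (N:ℝ)/N = 1 := div_self (ne_of_gt hNpos)
  rw [this] at hglift
  exact hglift
lemma lift_trans_end (hC1 : ∀ y, y ∈ (C y).source) (hC2 : ∀ y, f = ↑(C y))
    {x y z : M} (γ : Path x y) (δ : Path y z) {ξ : M}
    {g g₁ g₂ : ℝ → M} (hg : Continuous g) (hg0 : g 0 = ξ)
    (hgw : ∀ t ∈ Icc (0:ℝ) 1, f (g t) = (γ.trans δ).extend t)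
    (hg₁ : Continuous g₁) (hg₁0 : g₁ 0 = ξ) (hg₁w : ∀ t ∈ Icc (0:ℝ) 1, f (g₁ t) = γ.extend t)
    (hg₂ : Continuous g₂) (hg₂0 : g₂ 0 = g₁ 1)
    (hg₂w : ∀ t ∈ Icc (0:ℝ) 1, f (g₂ t) = δ.extend t) :
    g 1 = g₂ 1 := by
  set h : ℝ → M := fun t => if t ≤ 1/2 then g₁ (2*t) else g₂ (2*t - 1) with hh
  have hhc : Continuous h := by
    apply Continuous.if_le (hg₁.comp (by continuity)) (hg₂.comp (by continuity))
      continuous_id continuous_const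
    intro t htk
    simp only [id_eq] at htk
    rw [htk]
    norm_num [hg₂0]
  have hh0 : h 0 = ξ := by
    rw [hh]
    norm_num [hg₁0]
  have hhw : ∀ t ∈ Icc (0:ℝ) 1, f (h t) = (γ.trans δ).extend t := by
    intro t htI
    have htmem : t ∈ (Icc (0:ℝ) 1) := htI
    rw [Path.extend_apply _ htmem, Path.trans_apply]
    rw [hh]
    beta_reduce
    split_ifs with h1
    · have h2t : (2*t) ∈ Icc (0:ℝ) 1 := ⟨by linarith [htI.1], by linarith⟩
      exact (hg₁w _ h2t).trans (Path.extend_apply _ h2t)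
    · push_neg at h1
      have h2t : (2*t - 1) ∈ Icc (0:ℝ) 1 := ⟨by linarith, by linarith [htI.2]⟩
      exact (hg₂w _ h2t).trans (Path.extend_apply _ h2t)
  have heq := lift_unique hC1 hC2 hg hhc hgw hhw
    (c := 0) ⟨le_refl 0, zero_le_one⟩ (by rw [hg0, hh0])
  have h1 := heq ⟨zero_le_one, le_refl 1⟩
  rw [h1, hh]
  norm_num
lemma lift_homotopic_end (hr : 0 < r) (hC1 : ∀ y, y ∈ (C y).source) (hC2 : ∀ y, f = ↑(C y))
    (hC3 : ∀ y, Metric.ball (f y) r ⊆ (C y).target)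
    {x y : M} {γ₀ γ₁ : Path x y} (hom : γ₀.Homotopic γ₁) {ξ : M} (hξx : f ξ = x)
    {g₀ g₁ : ℝ → M} (hg₀ : Continuous g₀) (hg₀0 : g₀ 0 = ξ)
    (hg₀w : ∀ t ∈ Icc (0:ℝ) 1, f (g₀ t) = γ₀.extend t)
    (hg₁ : Continuous g₁) (hg₁0 : g₁ 0 = ξ)
    (hg₁w : ∀ t ∈ Icc (0:ℝ) 1, f (g₁ t) = γ₁.extend t) : g₀ 1 = g₁ 1 := by
  obtain ⟨H⟩ := hom
  set pI : ℝ → unitInterval := fun t => Set.projIcc 0 1 zero_le_one t with hpI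
  set Φ : ℝ → ℝ → M := fun s t => H (pI s, pI t) with hΦ
  have hΦc : Continuous fun p : ℝ × ℝ => Φ p.1 p.2 := by
    apply H.continuous.comp
    exact ((LipschitzWith.projIcc zero_le_one).continuous.comp continuous_fst).prodMk
      ((LipschitzWith.projIcc zero_le_one).continuous.comp continuous_snd)
  have hΦsc : ∀ s : ℝ, Continuous (Φ s) := by
    intro s
    exact hΦc.comp (Continuous.prodMk_right s)
  have hΦ0 : ∀ s : ℝ, Φ s 0 = x := by
    intro s
    have : pI 0 = 0 := by rw [hpI]; simp [Set.projIcc_left]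
    rw [hΦ]
    beta_reduce
    rw [this]
    exact H.source (pI s)
  have hΦ1 : ∀ s : ℝ, Φ s 1 = y := by
    intro s
    have : pI 1 = 1 := by rw [hpI]; simp [Set.projIcc_right]
    rw [hΦ]
    beta_reduce
    rw [this]
    exact H.target (pI s)
  have hΦγ₀ : ∀ t : ℝ, Φ 0 t = γ₀.extend t := by
    intro t
    have : pI 0 = 0 := by rw [hpI]; simp [Set.projIcc_left]
    rw [hΦ]
    beta_reduce
    rw [this]
    exact H.apply_zero (pI t)
  have hΦγ₁ : ∀ t : ℝ, Φ 1 t = γ₁.extend t := by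
    intro t
    have : pI 1 = 1 := by rw [hpI]; simp [Set.projIcc_right]
    rw [hΦ]
    beta_reduce
    rw [this]
    exact H.apply_one (pI t)
  -- uniform continuity
  obtain ⟨δ₀, hδ₀, hΦu⟩ : ∃ δ₀ > 0, ∀ s t s' t' : ℝ, dist s s' < δ₀ → dist t t' < δ₀ →
      dist (Φ s t) (Φ s' t') < r/2 := by
    have hu : UniformContinuous fun p : ℝ × ℝ => Φ p.1 p.2 := by
      apply (CompactSpace.uniformContinuous_of_continuous H.continuous).comp
      apply UniformContinuous.prodMk
      · exact (LipschitzWith.projIcc zero_le_one).uniformContinuous.comp uniformContinuous_fst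
      · exact (LipschitzWith.projIcc zero_le_one).uniformContinuous.comp uniformContinuous_snd
    rw [Metric.uniformContinuous_iff] at hu
    obtain ⟨δ₀, hδ₀, hd⟩ := hu (r/2) (by linarith)
    refine ⟨δ₀, hδ₀, fun s t s' t' h1 h2 => hd (a := (s,t)) (b := (s',t')) ?_⟩
    rw [Prod.dist_eq]
    exact max_lt h1 h2
  obtain ⟨n, hn⟩ := exists_nat_one_div_lt hδ₀
  set N : ℕ := n + 1 with hN
  have hNpos : (0:ℝ) < N := by positivity
  have hmesh : (1:ℝ)/N < δ₀ := by exact_mod_cast hn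
  -- lifts for each s
  choose G hGc hG0 hGw using fun s : ℝ =>
    lift_exists hr hC1 hC2 hC3 (hΦsc s) (ξ := ξ) (by rw [hΦ0 s, hξx])
  -- local constancy
  have locconst : ∀ s₀ ∈ Icc (0:ℝ) 1, ∃ δ > 0, ∀ s ∈ Icc (0:ℝ) 1, dist s s₀ < δ →
      G s 1 = G s₀ 1 := by
    intro s₀ hs₀
    have claim : ∀ k : ℕ, k ≤ N → ∃ δ > 0, ∃ ψ : ℝ → M,
        ψ s₀ = G s₀ ((k:ℝ)/N) ∧ ContinuousWithinAt ψ (Icc 0 1) s₀ ∧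
        (∀ s ∈ Icc (0:ℝ) 1, dist s s₀ < δ → G s ((k:ℝ)/N) = ψ s) ∧
        (0 < k → ∃ e : OpenPartialHomeomorph M M, f = ↑e ∧
          ψ = fun s => e.symm (Φ s ((k:ℝ)/N))) := by
      intro k
      induction k with
      | zero =>
        intro _
        refine ⟨1, one_pos, fun _ => ξ, ?_, continuousWithinAt_const, ?_, ?_⟩
        · simp only [Nat.cast_zero, zero_div]
          rw [hG0 s₀]
        · intro s _ _
          simp only [Nat.cast_zero, zero_div]
          rw [hG0 s]
        · intro h
          exact absurd h (lt_irrefl 0)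
      | succ k ih =>
        intro hk1
        have hkN : k ≤ N := le_of_lt (Nat.lt_of_succ_le hk1)
        obtain ⟨δk, hδk, ψ, hψ0, hψc, hψeq, _⟩ := ih hkN
        have hk0 : (0:ℝ) ≤ (k:ℝ)/N := by positivity
        have hkk1 : (k:ℝ)/N ≤ ((k:ℝ)+1)/N := by
          have h' : (k:ℝ) ≤ (k:ℝ)+1 := by linarith
          gcongr
        have hk1N : ((k:ℝ)+1)/N ≤ 1 := by
          rw [div_le_one hNpos]
          exact_mod_cast hk1
        have hkmem : (k:ℝ)/N ∈ Icc (0:ℝ) 1 := ⟨hk0, le_trans hkk1 hk1N⟩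
        have hk1mem : ((k:ℝ)+1)/N ∈ Icc (0:ℝ) 1 := ⟨le_trans hk0 hkk1, hk1N⟩
        set yst := G s₀ ((k:ℝ)/N) with hyst
        set e := C yst with he
        have hfyst : f yst = Φ s₀ ((k:ℝ)/N) := hGw s₀ _ hkmem
        -- ball membership for nearby parameters
        have hball : ∀ s t : ℝ, dist s s₀ < δ₀ → t ∈ Icc ((k:ℝ)/N) (((k:ℝ)+1)/N) →
            Φ s t ∈ e.target := by
          intro s t hss ht
          apply hC3 yst
          rw [hfyst]
          apply mem_ball.mpr
          have : dist (Φ s t) (Φ s₀ ((k:ℝ)/N)) < r/2 := by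
            apply hΦu _ _ _ _ hss
            rw [Real.dist_eq, abs_sub_lt_iff]
            have h3 : ((k:ℝ)+1)/N - (k:ℝ)/N = 1/N := by ring
            have h4 := ht.1
            have h5 := ht.2
            constructor
            · linarith [hmesh]
            · linarith [hmesh, one_div_pos.mpr hNpos]
          linarith [this, hr]
        -- source membership near s₀
        have hsrc : ∃ δ'' > 0, ∀ s ∈ Icc (0:ℝ) 1, dist s s₀ < δ'' → ψ s ∈ e.source := by
          have hy : ψ s₀ ∈ e.source := by rw [hψ0]; exact hC1 yst
          have hmem : ψ ⁻¹' e.source ∈ nhdsWithin s₀ (Icc (0:ℝ) 1) :=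
            hψc (e.open_source.mem_nhds hy)
          rw [Metric.mem_nhdsWithin_iff] at hmem
          obtain ⟨ε, hε, hsub⟩ := hmem
          exact ⟨ε, hε, fun s hs hd => hsub ⟨mem_ball.mpr hd, hs⟩⟩
        obtain ⟨δ'', hδ'', hsrc⟩ := hsrc
        set δ₁ := min (min δk δ'') δ₀ with hδ₁
        have hδ₁pos : 0 < δ₁ := lt_min (lt_min hδk hδ'') hδ₀
        -- the new ψ
        set ψ' : ℝ → M := fun s => e.symm (Φ s (((k:ℝ)+1)/N)) with hψ'
        have hkey : ∀ s ∈ Icc (0:ℝ) 1, dist s s₀ < δ₁ → G s (((k:ℝ)+1)/N) = ψ' s := by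
          intro s hs hd
          have hd0 : dist s s₀ < δ₀ := lt_of_lt_of_le hd (min_le_right _ _)
          have hdk : dist s s₀ < δk := lt_of_lt_of_le hd
            (le_trans (min_le_left _ _) (min_le_left _ _))
          have hd'' : dist s s₀ < δ'' := lt_of_lt_of_le hd
            (le_trans (min_le_left _ _) (min_le_right _ _))
          have hz : G s ((k:ℝ)/N) = ψ s := hψeq s hs hdk
          have hzsrc : G s ((k:ℝ)/N) ∈ e.source := by rw [hz]; exact hsrc s hs hd''
          have hfz : f (G s ((k:ℝ)/N)) = Φ s ((k:ℝ)/N) := hGw s _ hkmem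
          -- clamp
          set cl : ℝ → ℝ := fun t => min (max t ((k:ℝ)/N)) (((k:ℝ)+1)/N) with hcl
          have hclmem : ∀ t : ℝ, cl t ∈ Icc ((k:ℝ)/N) (((k:ℝ)+1)/N) :=
            fun t => ⟨le_min (le_max_right _ _) hkk1, min_le_right _ _⟩
          have hclcont : Continuous cl := (continuous_id.max continuous_const).min
            continuous_const
          have hwmem : ∀ t : ℝ, Φ s (cl t) ∈ e.target := fun t => hball s _ hd0 (hclmem t)
          set h : ℝ → M := fun t => e.symm (Φ s (cl t)) with hhdef
          have hhc : Continuous h :=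
            e.continuousOn_symm.comp_continuous ((hΦsc s).comp hclcont) hwmem
          have hhw : ∀ t ∈ Icc ((k:ℝ)/N) (((k:ℝ)+1)/N), f (h t) = Φ s t := by
            intro t ht
            have hclt : cl t = t := by
              rw [hcl]
              beta_reduce
              rw [max_eq_left ht.1, min_eq_left ht.2]
            rw [hhdef]
            beta_reduce
            rw [hclt, hC2 yst]
            exact e.right_inv (by rw [← hclt]; exact hwmem t)
          have hGw' : ∀ t ∈ Icc ((k:ℝ)/N) (((k:ℝ)+1)/N), f (G s t) = Φ s t := by
            intro t ht
            exact hGw s t ⟨le_trans hk0 ht.1, le_trans ht.2 hk1N⟩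
          have hagree : G s ((k:ℝ)/N) = h ((k:ℝ)/N) := by
            have hclk : cl ((k:ℝ)/N) = (k:ℝ)/N := by
              rw [hcl]
              beta_reduce
              rw [max_self, min_eq_left hkk1]
            rw [hhdef]
            beta_reduce
            rw [hclk, ← hfz, hC2 yst]
            exact (e.left_inv hzsrc).symm
          have := lift_unique hC1 hC2 (hGc s) hhc hGw' hhw
            (c := (k:ℝ)/N) ⟨le_refl _, hkk1⟩ hagree
          have hval := this ⟨hkk1, le_refl _⟩
          rw [hval, hhdef, hψ']
          beta_reduce
          congr 2
          rw [hcl]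
          beta_reduce
          rw [max_eq_left hkk1, min_self]
        have hψ'c : ContinuousWithinAt ψ' (Icc 0 1) s₀ := by
          apply ContinuousAt.continuousWithinAt
          have htar : Φ s₀ (((k:ℝ)+1)/N) ∈ e.target :=
            hball s₀ _ (by rw [dist_self]; exact hδ₀) ⟨hkk1, le_refl _⟩
          have h1 : ContinuousAt (fun s : ℝ => Φ s (((k:ℝ)+1)/N)) s₀ :=
            (hΦc.comp (continuous_id.prodMk continuous_const)).continuousAt
          exact ContinuousAt.comp (g := (e.symm : M → M))
            (f := fun s : ℝ => Φ s (((k:ℝ)+1)/N)) (x := s₀)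
            (e.continuousOn_symm.continuousAt (e.open_target.mem_nhds htar)) h1
        refine ⟨δ₁, hδ₁pos, ψ', ?_, hψ'c, ?_, ?_⟩
        · rw [show ((k+1 : ℕ):ℝ) = (k:ℝ)+1 by push_cast; ring]
          exact (hkey s₀ hs₀ (by rw [dist_self]; exact hδ₁pos)).symm
        · intro s hs hd
          rw [show ((k+1 : ℕ):ℝ) = (k:ℝ)+1 by push_cast; ring]
          exact hkey s hs hd
        · intro _
          refine ⟨e, hC2 yst, ?_⟩
          rw [hψ']
          funext s
          rw [show ((k+1 : ℕ):ℝ) = (k:ℝ)+1 by push_cast; ring]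
    obtain ⟨δ, hδ, ψ, hψ0, _, hψeq, hchart⟩ := claim N le_rfl
    obtain ⟨e, _, hψform⟩ := hchart (Nat.pos_of_ne_zero (by simp [hN]))
    have hNN : ((N:ℝ))/N = 1 := div_self (ne_of_gt hNpos)
    refine ⟨δ, hδ, fun s hs hd => ?_⟩
    have h1 : G s 1 = ψ s := by rw [← hNN]; exact hψeq s hs hd
    have h2 : ψ s = ψ s₀ := by
      rw [hψform]
      beta_reduce
      rw [hNN, hΦ1 s, hΦ1 s₀]
    have h3 : ψ s₀ = G s₀ 1 := by rw [hψ0, hNN]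
    rw [h1, h2, h3]
  -- clopen argument on [0,1]
  haveI : PreconnectedSpace (Icc (0:ℝ) 1) := Subtype.preconnectedSpace isPreconnected_Icc
  set T : Set (Icc (0:ℝ) 1) := {σ | G (σ:ℝ) 1 = G 0 1} with hT
  have hTopen : IsOpen T := by
    rw [isOpen_iff_mem_nhds]
    intro σ₀ hσ₀
    obtain ⟨δ, hδ, hloc⟩ := locconst (σ₀:ℝ) σ₀.2
    have hb : IsOpen ((fun σ : Icc (0:ℝ) 1 => (σ:ℝ)) ⁻¹' ball (σ₀:ℝ) δ) :=
      isOpen_ball.preimage continuous_subtype_val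
    refine Filter.mem_of_superset (hb.mem_nhds (by simp [mem_ball, dist_self, hδ])) ?_
    intro σ hσ
    show G (σ:ℝ) 1 = G 0 1
    rw [hloc (σ:ℝ) σ.2 (mem_ball.mp hσ), hσ₀]
  have hTclosed : IsClosed T := by
    rw [← isOpen_compl_iff, isOpen_iff_mem_nhds]
    intro σ₀ hσ₀
    obtain ⟨δ, hδ, hloc⟩ := locconst (σ₀:ℝ) σ₀.2
    have hb : IsOpen ((fun σ : Icc (0:ℝ) 1 => (σ:ℝ)) ⁻¹' ball (σ₀:ℝ) δ) :=
      isOpen_ball.preimage continuous_subtype_val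
    refine Filter.mem_of_superset (hb.mem_nhds (by simp [mem_ball, dist_self, hδ])) ?_
    intro σ hσ hmem
    apply hσ₀
    show G (σ₀:ℝ) 1 = G 0 1
    rw [← hloc (σ:ℝ) σ.2 (mem_ball.mp hσ)]
    exact hmem
  have h0T : (⟨0, ⟨le_refl 0, zero_le_one⟩⟩ : Icc (0:ℝ) 1) ∈ T := rfl
  have hTuniv : T = univ := IsClopen.eq_univ ⟨hTclosed, hTopen⟩ ⟨_, h0T⟩
  have h1T : G 1 1 = G 0 1 := by
    have : (⟨1, ⟨zero_le_one, le_refl 1⟩⟩ : Icc (0:ℝ) 1) ∈ T := hTuniv ▸ mem_univ _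
    exact this
  -- identify endpoints
  have hid0 : g₀ 1 = G 0 1 := by
    have heq := lift_unique hC1 hC2 hg₀ (hGc 0) (w := Φ 0)
      (fun t ht => by rw [hg₀w t ht, hΦγ₀ t]) (fun t ht => hGw 0 t ht)
      (c := 0) ⟨le_refl 0, zero_le_one⟩ (by rw [hg₀0, hG0 0])
    exact heq ⟨zero_le_one, le_refl 1⟩
  have hid1 : g₁ 1 = G 1 1 := by
    have heq := lift_unique hC1 hC2 hg₁ (hGc 1) (w := Φ 1)
      (fun t ht => by rw [hg₁w t ht, hΦγ₁ t]) (fun t ht => hGw 1 t ht)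
      (c := 0) ⟨le_refl 0, zero_le_one⟩ (by rw [hg₁0, hG0 1])
    exact heq ⟨zero_le_one, le_refl 1⟩
  rw [hid0, hid1, h1T]
end Lift
section Charts
open Set Metric
lemma exists_uniform_charts {M : Type*} [MetricSpace M] [CompactSpace M] [Nonempty M] {f : M → M}
    (hf : IsLocalHomeomorph f) :
    ∃ r : ℝ, 0 < r ∧ ∃ C : M → OpenPartialHomeomorph M M, (∀ y, y ∈ (C y).source) ∧
      (∀ y, f = ↑(C y)) ∧ ∀ y, Metric.ball (f y) r ⊆ (C y).target := by
  have h1 : ∀ y : M, ∃ e : OpenPartialHomeomorph M M, ∃ ρ : ℝ, 0 < ρ ∧ y ∈ e.source ∧ f = ↑e ∧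
      Metric.ball (f y) (2*ρ) ⊆ e.target := by
    intro y
    obtain ⟨e, hy, hfe⟩ := hf y
    have hft : f y ∈ e.target := by rw [hfe]; exact e.map_source hy
    obtain ⟨ρ2, hρ2, hball⟩ := Metric.isOpen_iff.mp e.open_target (f y) hft
    refine ⟨e, ρ2/2, by linarith, hy, hfe, ?_⟩
    have : 2*(ρ2/2) = ρ2 := by ring
    rw [this]
    exact hball
  choose E ρ hρ hyE hfE hballE using h1
  set U : M → Set M := fun y => (E y).source ∩ f ⁻¹' (Metric.ball (f y) (ρ y)) with hU
  have hUopen : ∀ y, IsOpen (U y) :=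
    fun y => ((E y).open_source.inter (isOpen_ball.preimage hf.continuous))
  have hUmem : ∀ y, y ∈ U y := fun y => ⟨hyE y, by simp [mem_ball, dist_self, hρ y]⟩
  obtain ⟨T, hT⟩ := IsCompact.elim_finite_subcover isCompact_univ U hUopen
    (fun z _ => mem_iUnion.mpr ⟨z, hUmem z⟩)
  have hTne : T.Nonempty := by
    by_contra h
    rw [Finset.not_nonempty_iff_eq_empty] at h
    obtain ⟨z⟩ := ‹Nonempty M›
    have h2 := hT (mem_univ z)
    rw [h] at h2
    simp at h2
  set r := T.inf' hTne ρ with hrdef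
  have hrpos : 0 < r := by
    rw [hrdef, Finset.lt_inf'_iff]
    exact fun i _ => hρ i
  have hcover : ∀ y : M, ∃ y₀, y₀ ∈ T ∧ y ∈ U y₀ := by
    intro y
    have h2 := hT (mem_univ y)
    rw [mem_iUnion₂] at h2
    obtain ⟨i, hi, hmem⟩ := h2
    exact ⟨i, hi, hmem⟩
  choose y₀ hy₀T hy₀U using hcover
  refine ⟨r, hrpos, fun y => E (y₀ y), fun y => (hy₀U y).1, fun y => hfE (y₀ y), fun y => ?_⟩
  intro z hz
  apply hballE (y₀ y)
  rw [mem_ball] at hz ⊢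
  have h5 : dist (f y) (f (y₀ y)) < ρ (y₀ y) := by
    have h6 := (hy₀U y).2
    simpa [mem_ball] using h6
  have h6 : r ≤ ρ (y₀ y) := Finset.inf'_le ρ (hy₀T y)
  calc dist z (f (y₀ y)) ≤ dist z (f y) + dist (f y) (f (y₀ y)) := dist_triangle _ _ _
    _ < r + ρ (y₀ y) := add_lt_add hz h5
    _ ≤ 2 * ρ (y₀ y) := by linarith
end Charts

end Statement6Aux
open Set Metric in
/-- In a compact connected geodesic metric space `M` (such as a compact Riemannian manifold
with its Riemannian distance, where the length of a path is its total variation), if every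
closed non-nullhomotopic loop has length at least `4ε`, then any local homeomorphism
(e.g. a local diffeomorphism) `f : M → M` with `d(f x, x) < ε` for all `x` is injective. -/
theorem statement6 {M : Type*} [MetricSpace M] [CompactSpace M] [ConnectedSpace M]
    (hgeo : ∀ p q : M, ∃ γ : Path p q, eVariationOn γ Set.univ = ENNReal.ofReal (dist p q))
    (ε : ℝ) (hε : 0 < ε)
    (hloops : ∀ (x : M) (γ : Path x x), ¬ γ.Homotopic (Path.refl x) →
      ENNReal.ofReal (4 * ε) ≤ eVariationOn γ Set.univ)
    (f : M → M) (hf : IsLocalHomeomorph f) (hclose : ∀ x : M, dist (f x) x < ε) :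
    Function.Injective f := by
  classical
  rcases isEmpty_or_nonempty M with hM | hM
  · intro a b _
    exact (IsEmpty.false a).elim
  obtain ⟨r, hr, C, hC1, hC2, hC3⟩ := Statement6Aux.exists_uniform_charts hf
  choose geod hgeod using hgeo
  have hstart : ∀ x : M, f x = (geod (f x) x).extend 0 := fun x => by rw [Path.extend_zero]
  choose g hgc hg0 hgw using fun x : M =>
    Statement6Aux.lift_exists hr hC1 hC2 hC3 (geod (f x) x).continuous_extend (ξ := x) (hstart x)
  set Ψ : M → M := fun x => g x 1 with hΨ
  have hfΨ : ∀ x, f (Ψ x) = x := by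
    intro x
    rw [hΨ]
    beta_reduce
    rw [hgw x 1 ⟨zero_le_one, le_refl 1⟩, Path.extend_one]
  -- the key local formula
  have hloc : ∀ x₀ : M, ∃ δ > 0, ∀ x : M, dist x x₀ < δ → Ψ x = (C (Ψ x₀)).symm x := by
    intro x₀
    set e₀ := C x₀ with he₀
    set e₁ := C (Ψ x₀) with he₁
    -- δ for continuity of f at x₀
    obtain ⟨δf, hδf, hδfd⟩ : ∃ δf > 0, ∀ x : M, dist x x₀ < δf →
        dist (f x) (f x₀) < min (ε/2) (r/4) := by
      have hc : ContinuousAt f x₀ := hf.continuous.continuousAt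
      rw [Metric.continuousAt_iff] at hc
      obtain ⟨δf, hδf, hd⟩ := hc (min (ε/2) (r/4)) (by positivity)
      exact ⟨δf, hδf, fun x hx => hd hx⟩
    obtain ⟨δs, hδs, hδsb⟩ : ∃ δs > 0, ball x₀ δs ⊆ e₀.source :=
      Metric.isOpen_iff.mp e₀.open_source x₀ (hC1 x₀)
    set δ := min δf (min δs (min (ε/2) r)) with hδdef
    have hδpos : 0 < δ := by
      apply lt_min hδf
      apply lt_min hδs
      apply lt_min (by positivity) hr
    refine ⟨δ, hδpos, fun x hx => ?_⟩
    have hxf : dist (f x) (f x₀) < min (ε/2) (r/4) :=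
      hδfd x (lt_of_lt_of_le hx (min_le_left _ _))
    have hxs : x ∈ e₀.source :=
      hδsb (mem_ball.mpr (lt_of_lt_of_le hx (le_trans (min_le_right _ _) (min_le_left _ _))))
    have hxε : dist x x₀ < min (ε/2) r :=
      lt_of_lt_of_le hx (le_trans (min_le_right _ _) (min_le_right _ _))
    set a := f x with ha
    set w : Path a (f x₀) := geod a (f x₀) with hw
    set w' : Path x₀ x := geod x₀ x with hw'
    set σx : Path a x := geod a x with hσx
    set σ₀ : Path (f x₀) x₀ := geod (f x₀) x₀ with hσ₀
    set P : Path a x := (w.trans σ₀).trans w' with hP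
    set D : Path a a := P.trans σx.symm with hD
    -- length bound
    have hvar : eVariationOn D Set.univ ≤
        ENNReal.ofReal (dist a (f x₀) + dist (f x₀) x₀ + dist x₀ x + dist a x) := by
      calc eVariationOn D Set.univ
          ≤ eVariationOn P Set.univ + eVariationOn σx.symm Set.univ := Statement6Aux.evar_trans_le _ _
        _ ≤ (eVariationOn (w.trans σ₀) Set.univ + eVariationOn w' Set.univ)
            + eVariationOn σx Set.univ := by
            gcongr
            · exact Statement6Aux.evar_trans_le _ _
            · exact Statement6Aux.evar_symm_le _
        _ ≤ ((eVariationOn w Set.univ + eVariationOn σ₀ Set.univ) + eVariationOn w' Set.univ)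
            + eVariationOn σx Set.univ := by
            gcongr
            exact Statement6Aux.evar_trans_le _ _
        _ = ENNReal.ofReal (dist a (f x₀) + dist (f x₀) x₀ + dist x₀ x + dist a x) := by
            rw [hgeod, hgeod, hgeod, hgeod]
            rw [← ENNReal.ofReal_add dist_nonneg dist_nonneg,
              ← ENNReal.ofReal_add (by positivity) dist_nonneg,
              ← ENNReal.ofReal_add (by positivity) dist_nonneg]
    have hsum : dist a (f x₀) + dist (f x₀) x₀ + dist x₀ x + dist a x < 4 * ε := by
      have h1 : dist a (f x₀) < ε/2 := lt_of_lt_of_le hxf (min_le_left _ _)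
      have h2 : dist (f x₀) x₀ < ε := hclose x₀
      have h3 : dist x₀ x < ε/2 := by
        rw [dist_comm]
        exact lt_of_lt_of_le hxε (min_le_left _ _)
      have h4 : dist a x < ε := hclose x
      linarith
    have hDnull : D.Homotopic (Path.refl a) := by
      by_contra hcon
      have hge := hloops a D hcon
      have hlt : eVariationOn D Set.univ < ENNReal.ofReal (4*ε) :=
        lt_of_le_of_lt hvar (by
          rw [ENNReal.ofReal_lt_ofReal_iff (by positivity)]
          exact hsum)
      exact absurd (lt_of_le_of_lt hge hlt) (lt_irrefl _)
    have hσP : σx.Homotopic P := Statement6Aux.homotopic_of_trans_symm P σx hDnull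
    -- lifts of P and its pieces
    obtain ⟨gP, hgPc, hgP0, hgPw⟩ := Statement6Aux.lift_exists hr hC1 hC2 hC3 P.continuous_extend
      (ξ := x) (by rw [Path.extend_zero])
    obtain ⟨gQ, hgQc, hgQ0, hgQw⟩ := Statement6Aux.lift_exists hr hC1 hC2 hC3 (w.trans σ₀).continuous_extend
      (ξ := x) (by rw [Path.extend_zero])
    -- chart lift of w from x
    have hwtar : ∀ t : ℝ, w.extend t ∈ e₀.target := by
      intro t
      apply hC3 x₀
      rw [mem_ball]
      have h1 : dist (w.extend t) a ≤ dist a (f x₀) :=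
        Statement6Aux.dist_le_of_evarX w dist_nonneg (le_of_eq (hgeod _ _)) t
      have h2 : dist a (f x₀) < r/4 := lt_of_lt_of_le hxf (min_le_right _ _)
      calc dist (w.extend t) (f x₀) ≤ dist (w.extend t) a + dist a (f x₀) := dist_triangle _ _ _
        _ < r/4 + r/4 := by linarith
        _ ≤ r := by linarith
    set gw : ℝ → M := fun t => e₀.symm (w.extend t) with hgwdef
    have hgwc : Continuous gw := e₀.continuousOn_symm.comp_continuous w.continuous_extend hwtar
    have hgw0 : gw 0 = x := by
      show e₀.symm (w.extend 0) = x
      rw [Path.extend_zero, ha, congrFun (hC2 x₀) x]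
      exact e₀.left_inv hxs
    have hgwlift : ∀ t ∈ Icc (0:ℝ) 1, f (gw t) = w.extend t := by
      intro t _
      calc f (gw t) = e₀ (e₀.symm (w.extend t)) := congrFun (hC2 x₀) _
        _ = w.extend t := e₀.right_inv (hwtar t)
    have hgw1 : gw 1 = x₀ := by
      show e₀.symm (w.extend 1) = x₀
      rw [Path.extend_one, congrFun (hC2 x₀) x₀]
      exact e₀.left_inv (hC1 x₀)
    -- chart lift of w' from Ψ x₀
    have hw'tar : ∀ t : ℝ, w'.extend t ∈ e₁.target := by
      intro t
      apply hC3 (Ψ x₀)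
      rw [mem_ball, hfΨ x₀]
      have h1 : dist (w'.extend t) x₀ ≤ dist x₀ x :=
        Statement6Aux.dist_le_of_evarX w' dist_nonneg (le_of_eq (hgeod _ _)) t
      have h2 : dist x₀ x < r := by
        rw [dist_comm]
        exact lt_of_lt_of_le hxε (min_le_right _ _)
      linarith
    set gw' : ℝ → M := fun t => e₁.symm (w'.extend t) with hgw'def
    have hgw'c : Continuous gw' := e₁.continuousOn_symm.comp_continuous w'.continuous_extend hw'tar
    have hgw'0 : gw' 0 = Ψ x₀ := by
      show e₁.symm (w'.extend 0) = Ψ x₀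
      rw [Path.extend_zero]
      nth_rewrite 1 [← hfΨ x₀]
      rw [congrFun (hC2 (Ψ x₀)) (Ψ x₀)]
      exact e₁.left_inv (hC1 (Ψ x₀))
    have hgw'lift : ∀ t ∈ Icc (0:ℝ) 1, f (gw' t) = w'.extend t := by
      intro t _
      calc f (gw' t) = e₁ (e₁.symm (w'.extend t)) := congrFun (hC2 (Ψ x₀)) _
        _ = w'.extend t := e₁.right_inv (hw'tar t)
    have hgw'1 : gw' 1 = e₁.symm x := by
      rw [hgw'def]
      beta_reduce
      rw [Path.extend_one]
    -- gQ 1 = Ψ x₀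
    have hgQ1 : gQ 1 = Ψ x₀ := by
      have := Statement6Aux.lift_trans_end hC1 hC2 w σ₀ hgQc hgQ0 hgQw hgwc hgw0 hgwlift
        (hgc x₀) (by rw [hg0 x₀, hgw1]) (fun t ht => hgw x₀ t ht)
      rw [this, hΨ]
    -- gP 1 = gw' 1
    have hgP1 : gP 1 = e₁.symm x := by
      have := Statement6Aux.lift_trans_end hC1 hC2 (w.trans σ₀) w' hgPc hgP0 hgPw
        hgQc hgQ0 hgQw hgw'c (by rw [hgw'0, hgQ1]) hgw'lift
      rw [this, hgw'1]
    -- homotopy invariance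
    have hend := Statement6Aux.lift_homotopic_end hr hC1 hC2 hC3 hσP (ξ := x) rfl
      (hgc x) (hg0 x) (fun t ht => hgw x t ht) hgPc hgP0 hgPw
    show g x 1 = e₁.symm x
    rw [hend, hgP1]
  -- continuity of Ψ
  have hΨcont : Continuous Ψ := by
    rw [continuous_iff_continuousAt]
    intro x₀
    obtain ⟨δ, hδ, hform⟩ := hloc x₀
    have htar : x₀ ∈ (C (Ψ x₀)).target := by
      apply hC3 (Ψ x₀)
      rw [mem_ball, hfΨ x₀, dist_self]
      exact hr
    have h1 : ContinuousAt ((C (Ψ x₀)).symm : M → M) x₀ :=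
      (C (Ψ x₀)).continuousOn_symm.continuousAt ((C (Ψ x₀)).open_target.mem_nhds htar)
    apply ContinuousAt.congr h1
    apply Filter.eventuallyEq_of_mem (Metric.ball_mem_nhds x₀ hδ)
    intro x hx
    exact (hform x (mem_ball.mp hx)).symm
  -- range Ψ is clopen
  have hopen : IsOpen (Set.range Ψ) := by
    rw [isOpen_iff_mem_nhds]
    rintro y ⟨x₀, rfl⟩
    obtain ⟨δ, hδ, hform⟩ := hloc x₀
    set e₁ := C (Ψ x₀) with he₁
    have hO : IsOpen (e₁.source ∩ e₁ ⁻¹' (ball x₀ δ)) := e₁.isOpen_inter_preimage isOpen_ball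
    have hmem : Ψ x₀ ∈ e₁.source ∩ e₁ ⁻¹' (ball x₀ δ) := by
      refine ⟨hC1 _, ?_⟩
      show e₁ (Ψ x₀) ∈ ball x₀ δ
      rw [← hC2 (Ψ x₀), hfΨ x₀]
      exact mem_ball_self hδ
    refine Filter.mem_of_superset (hO.mem_nhds hmem) ?_
    rintro z ⟨hz1, hz2⟩
    refine ⟨e₁ z, ?_⟩
    rw [hform _ (mem_ball.mp hz2)]
    exact e₁.left_inv hz1
  have hclosed : IsClosed (Set.range Ψ) := (isCompact_range hΨcont).isClosed
  have huniv : Set.range Ψ = Set.univ :=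
    IsClopen.eq_univ ⟨hclosed, hopen⟩ (Set.range_nonempty Ψ)
  -- conclusion
  intro p q hpq
  obtain ⟨ap, hap⟩ : p ∈ Set.range Ψ := huniv ▸ Set.mem_univ p
  obtain ⟨aq, haq⟩ : q ∈ Set.range Ψ := huniv ▸ Set.mem_univ q
  have h1 : ap = f p := by rw [← hap, hfΨ]
  have h2 : aq = f q := by rw [← haq, hfΨ]
  rw [← hap, ← haq, h1, h2, hpq]
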